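/- Let D, W ⊆ ℝ^d, let K be a Markov kernel from D to probability measures on W, and let γ ≥ 1. Then for any two probability measures μ, ν on D, E_γ(μK‖νK) ≤ E_γ(μ‖ν) · sup_{w₁,w₂ ∈ D} E_γ(K(w₁)‖K(w₂)). -/

import Mathlib

open MeasureTheory ProbabilityTheory Real

/-- The hockey-stick (`E_γ`) divergence: `E_γ(μ‖ν) = sup_A [μ(A) − γ·ν(A)]`,
the supremum over all measurable sets `A`. -/
noncomputable def Egamma {α : Type*} [MeasurableSpace α] (γ : ℝ) (μ ν : Measure α) : ℝ :=
  ⨆ (A : Set α) (_ : MeasurableSet A), ((μ A).toReal - γ * (ν A).toReal)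

section helpers
variable {α : Type*} [MeasurableSpace α] {γ : ℝ} {μ ν : Measure α}

lemma inner_le_one [IsProbabilityMeasure μ] (hγ : 0 ≤ γ) (A : Set α) :
    (⨆ _ : MeasurableSet A, ((μ A).toReal - γ * (ν A).toReal)) ≤ 1 := by
  rcases em (MeasurableSet A) with h | h
  · rw [ciSup_pos h]
    have h1 : (μ A).toReal ≤ 1 := by
      have := prob_le_one (μ := μ) (s := A)
      simpa using ENNReal.toReal_mono (by norm_num) this
    have h2 : 0 ≤ γ * (ν A).toReal := mul_nonneg hγ ENNReal.toReal_nonneg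
    linarith
  · haveI : IsEmpty (MeasurableSet A) := ⟨h⟩
    rw [Real.iSup_of_isEmpty]
    norm_num

lemma le_Egamma [IsProbabilityMeasure μ] (hγ : 0 ≤ γ) {A : Set α} (hA : MeasurableSet A) :
    (μ A).toReal - γ * (ν A).toReal ≤ Egamma γ μ ν := by
  have hb : BddAbove (Set.range fun A : Set α =>
      ⨆ _ : MeasurableSet A, ((μ A).toReal - γ * (ν A).toReal)) := by
    refine ⟨1, ?_⟩
    rintro _ ⟨B, rfl⟩
    exact inner_le_one hγ B
  haveI : Nonempty (MeasurableSet A) := ⟨hA⟩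
  calc (μ A).toReal - γ * (ν A).toReal
      = ⨆ _ : MeasurableSet A, ((μ A).toReal - γ * (ν A).toReal) := ciSup_const.symm
    _ ≤ Egamma γ μ ν := le_ciSup hb A

lemma Egamma_nonneg [IsProbabilityMeasure μ] (hγ : 0 ≤ γ) : 0 ≤ Egamma γ μ ν := by
  have := le_Egamma (μ := μ) (ν := ν) hγ MeasurableSet.empty
  simpa using this

lemma Egamma_le_one [IsProbabilityMeasure μ] (hγ : 0 ≤ γ) : Egamma γ μ ν ≤ 1 :=
  ciSup_le fun A => inner_le_one hγ A

lemma Egamma_le_of {c : ℝ} (hc : 0 ≤ c)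
    (h : ∀ A : Set α, MeasurableSet A → (μ A).toReal - γ * (ν A).toReal ≤ c) :
    Egamma γ μ ν ≤ c := by
  refine ciSup_le fun A => ?_
  rcases em (MeasurableSet A) with hA | hA
  · rw [ciSup_pos hA]; exact h A hA
  · haveI : IsEmpty (MeasurableSet A) := ⟨hA⟩
    rw [Real.iSup_of_isEmpty]; exact hc

end helpers


/-- For `D, W ⊆ ℝ^d`, a Markov kernel `K` from `D` to probability
measures on `W`, `γ ≥ 1`, and any two probability measures `μ, ν` on `D`,
`E_γ(μK‖νK) ≤ E_γ(μ‖ν) · sup_{w₁,w₂ ∈ D} E_γ(K(w₁)‖K(w₂))`. -/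
theorem Egamma_bind_le {d : ℕ}
    (D W : Set (EuclideanSpace ℝ (Fin d)))
    (K : ↥D → Measure ↥W)
    (hKprob : ∀ w, IsProbabilityMeasure (K w))
    (hKmeas : Measurable K)
    (γ : ℝ) (hγ : 1 ≤ γ)
    (μ ν : Measure ↥D) [IsProbabilityMeasure μ] [IsProbabilityMeasure ν] :
    Egamma γ (μ.bind K) (ν.bind K) ≤
      Egamma γ μ ν * ⨆ p : ↥D × ↥D, Egamma γ (K p.1) (K p.2) := by
  haveI := hKprob
  have hγpos : (0:ℝ) < γ := lt_of_lt_of_le zero_lt_one hγ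
  have hγ0 : (0:ℝ) ≤ γ := hγpos.le
  haveI hne : Nonempty ↥D := by
    by_contra h
    rw [not_nonempty_iff] at h
    have h1 : μ Set.univ = 1 := measure_univ
    rw [Set.univ_eq_empty_iff.mpr h] at h1
    simp at h1
  set C := ⨆ p : ↥D × ↥D, Egamma γ (K p.1) (K p.2) with hCdef
  have hCb : BddAbove (Set.range fun p : ↥D × ↥D => Egamma γ (K p.1) (K p.2)) := by
    refine ⟨1, ?_⟩
    rintro _ ⟨p, rfl⟩
    exact Egamma_le_one hγ0
  have hCle : ∀ w1 w2 : ↥D, Egamma γ (K w1) (K w2) ≤ C := fun w1 w2 =>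
    le_ciSup hCb (w1, w2)
  have hC0 : 0 ≤ C :=
    le_trans (Egamma_nonneg hγ0) (hCle (Classical.arbitrary _) (Classical.arbitrary _))
  set ε := Egamma γ μ ν with hεdef
  have hε0 : 0 ≤ ε := Egamma_nonneg hγ0
  have hε1 : ε ≤ 1 := Egamma_le_one hγ0
  refine Egamma_le_of (mul_nonneg hε0 hC0) ?_
  intro A hA
  set f : ↥D → ℝ := fun w => (K w A).toReal with hfdef
  have hfm : Measurable f := ((Measure.measurable_coe hA).comp hKmeas).ennreal_toReal
  have hf0 : ∀ w, 0 ≤ f w := fun w => ENNReal.toReal_nonneg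
  have hf1 : ∀ w, f w ≤ 1 := by
    intro w
    have h1 : K w A ≤ 1 := prob_le_one
    calc f w ≤ (1:ENNReal).toReal := ENNReal.toReal_mono ENNReal.one_ne_top h1
      _ = 1 := by simp
  have hbindR : ∀ (ρ : Measure ↥D), ((ρ.bind K) A).toReal = ∫ w, f w ∂ρ := by
    intro ρ
    rw [Measure.bind_apply hA hKmeas.aemeasurable]
    exact (integral_toReal ((Measure.measurable_coe hA).comp hKmeas).aemeasurable
      (ae_of_all _ fun w => measure_lt_top _ _)).symm
  have hfbddA : BddAbove (Set.range f) := ⟨1, by rintro _ ⟨w, rfl⟩; exact hf1 w⟩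
  have hfbddB : BddBelow (Set.range f) := ⟨0, by rintro _ ⟨w, rfl⟩; exact hf0 w⟩
  set a := ⨆ w, f w with hadef
  set b := ⨅ w, f w with hbdef
  have hble : ∀ w, b ≤ f w := fun w => ciInf_le hfbddB w
  have hlea : ∀ w, f w ≤ a := fun w => le_ciSup hfbddA w
  have hb0 : 0 ≤ b := le_ciInf hf0
  have hba : b ≤ a := le_trans (hble (Classical.arbitrary _)) (hlea _)
  have hpt : ∀ w1 w2 : ↥D, f w1 - γ * f w2 ≤ C := fun w1 w2 =>
    le_trans (le_Egamma hγ0 hA) (hCle w1 w2)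
  have haC : a - γ * b ≤ C := by
    have h2 : a ≤ γ * b + C := by
      refine ciSup_le fun w1 => ?_
      have hb' : (f w1 - C) / γ ≤ b := by
        refine le_ciInf fun w2 => ?_
        rw [div_le_iff₀ hγpos]
        nlinarith [hpt w1 w2]
      rw [div_le_iff₀ hγpos] at hb'
      nlinarith [hb']
    linarith
  -- integrability of f
  have hint : ∀ (ρ : Measure ↥D) [IsProbabilityMeasure ρ], Integrable f ρ := by
    intro ρ _
    exact (integrable_const (1:ℝ)).mono' hfm.aestronglyMeasurable
      (ae_of_all _ fun w => by
        rw [Real.norm_eq_abs, abs_of_nonneg (hf0 w)]; exact hf1 w)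
  set M := a - b with hMdef
  have hM0 : 0 ≤ M := by simp [hMdef]; linarith
  -- layer cake for g = f - b
  have hlayer : ∀ (ρ : Measure ↥D) [IsProbabilityMeasure ρ],
      ∫ w, (f w - b) ∂ρ = ∫ t in Set.Ioi (0:ℝ), ((ρ {w | t < f w - b}).toReal) := by
    intro ρ _
    exact Integrable.integral_eq_integral_meas_lt ((hint ρ).sub (integrable_const b))
      (ae_of_all _ fun w => sub_nonneg.mpr (hble w))
  have hSm : ∀ t : ℝ, MeasurableSet {w : ↥D | t < f w - b} := fun t =>
    measurableSet_lt measurable_const (hfm.sub measurable_const)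
  have hSempty : ∀ t : ℝ, M < t → {w : ↥D | t < f w - b} = ∅ := by
    intro t ht
    ext w
    simp only [Set.mem_setOf_eq, Set.mem_empty_iff_false, iff_false, not_lt]
    have := hlea w
    simp [hMdef] at ht ⊢
    linarith
  have hφm : ∀ ρ : Measure ↥D, Measurable (fun t : ℝ => (ρ {w | t < f w - b}).toReal) := by
    intro ρ
    have hanti : Antitone (fun t : ℝ => ρ {w | t < f w - b}) := fun s t hst =>
      measure_mono fun w hw => lt_of_le_of_lt hst hw
    exact hanti.measurable.ennreal_toReal
  have hφle1 : ∀ (ρ : Measure ↥D) [IsProbabilityMeasure ρ],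
      ∀ t : ℝ, (ρ {w | t < f w - b}).toReal ≤ 1 := by
    intro ρ _ t
    have h1 : ρ {w | t < f w - b} ≤ 1 := prob_le_one
    calc (ρ {w | t < f w - b}).toReal ≤ (1:ENNReal).toReal :=
        ENNReal.toReal_mono ENNReal.one_ne_top h1
      _ = 1 := by simp
  have hindint : ∀ c : ℝ, Integrable (Set.indicator (Set.Ioc 0 M) fun _ => c)
      ((volume : Measure ℝ).restrict (Set.Ioi 0)) := by
    intro c
    rw [integrable_indicator_iff measurableSet_Ioc]
    refine (integrableOn_const_iff (C := c)).mpr (Or.inr ?_)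
    calc ((volume : Measure ℝ).restrict (Set.Ioi 0)) (Set.Ioc 0 M)
        ≤ (volume : Measure ℝ) (Set.Ioc 0 M) := Measure.restrict_le_self _
      _ < ⊤ := measure_Ioc_lt_top
  have hφint : ∀ (ρ : Measure ↥D) [IsProbabilityMeasure ρ],
      Integrable (fun t : ℝ => (ρ {w | t < f w - b}).toReal)
        ((volume : Measure ℝ).restrict (Set.Ioi 0)) := by
    intro ρ _
    refine (hindint 1).mono' (hφm ρ).aestronglyMeasurable ?_
    refine (ae_restrict_iff' measurableSet_Ioi).mpr (ae_of_all _ fun t ht => ?_)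
    rw [Real.norm_eq_abs, abs_of_nonneg ENNReal.toReal_nonneg]
    rcases le_or_gt t M with h | h
    · have : t ∈ Set.Ioc 0 M := ⟨ht, h⟩
      rw [Set.indicator_of_mem this]
      exact hφle1 ρ t
    · rw [hSempty t h]
      simp [Set.indicator_nonneg]
  -- the key integral bound
  have hkey : ∫ t in Set.Ioi (0:ℝ), ((μ {w | t < f w - b}).toReal
        - γ * (ν {w | t < f w - b}).toReal) ≤ ε * M := by
    have hmono : ∫ t in Set.Ioi (0:ℝ), ((μ {w | t < f w - b}).toReal
          - γ * (ν {w | t < f w - b}).toReal)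
        ≤ ∫ t in Set.Ioi (0:ℝ), (Set.indicator (Set.Ioc 0 M) fun _ => ε) t := by
      refine integral_mono_ae ((hφint μ).sub ((hφint ν).const_mul γ)) (hindint ε) ?_
      refine (ae_restrict_iff' measurableSet_Ioi).mpr (ae_of_all _ fun t ht => ?_)
      rcases le_or_gt t M with h | h
      · have htm : t ∈ Set.Ioc 0 M := ⟨ht, h⟩
        rw [Set.indicator_of_mem htm]
        exact le_Egamma hγ0 (hSm t)
      · rw [Set.indicator_of_notMem (by simp [Set.mem_Ioc]; intro _; linarith)]
        simp only [hSempty t h, measure_empty, ENNReal.toReal_zero]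
        simp
    refine le_trans hmono ?_
    rw [integral_indicator measurableSet_Ioc, Measure.restrict_restrict measurableSet_Ioc,
      Set.inter_eq_left.mpr Set.Ioc_subset_Ioi_self, setIntegral_const, Real.volume_real_Ioc_of_le hM0,
      smul_eq_mul]
    have hcomm : (M - 0) * ε = ε * M := by ring
    linarith
  -- assemble
  have hμint := hint μ
  have hνint := hint ν
  have hgμ : ∫ w, (f w - b) ∂μ = (∫ w, f w ∂μ) - b := by
    rw [integral_sub hμint (integrable_const b), integral_const]; simp
  have hgν : ∫ w, (f w - b) ∂ν = (∫ w, f w ∂ν) - b := by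
    rw [integral_sub hνint (integrable_const b), integral_const]; simp
  have hsplit : ∫ t in Set.Ioi (0:ℝ), ((μ {w | t < f w - b}).toReal
        - γ * (ν {w | t < f w - b}).toReal)
      = (∫ t in Set.Ioi (0:ℝ), (μ {w | t < f w - b}).toReal)
        - γ * ∫ t in Set.Ioi (0:ℝ), (ν {w | t < f w - b}).toReal := by
    rw [integral_sub (hφint μ) ((hφint ν).const_mul γ), integral_const_mul]
  rw [hbindR μ, hbindR ν]
  have hfinal : (∫ w, f w ∂μ) - γ * ∫ w, f w ∂ν ≤ ε * M + b * (1 - γ) := by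
    have e1 := hlayer μ
    have e2 := hlayer ν
    rw [hgμ] at e1
    rw [hgν] at e2
    have := hkey
    rw [hsplit, ← e1, ← e2] at this
    linarith
  have h1 : 0 ≤ ε * (C - (a - γ * b)) := mul_nonneg hε0 (by linarith)
  have h2 : 0 ≤ (1 - ε) * b * (γ - 1) :=
    mul_nonneg (mul_nonneg (by linarith) hb0) (by linarith)
  nlinarith [hfinal, h1, h2]
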